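/- Let K ≤ -2 and let T be the (2k-1)×(2k-1) symmetric tridiagonal Toeplitz matrix with diagonal K and off-diagonal 1, indexed by S^(k) = {-(k-1),...,k-1}. With m = arccosh(-K/2), the entries of -T^{-1} are given by [(-T)^{-1}](i,j) = (cosh((2k - |i-j|)m) - cosh((i+j)m)) / (2 sinh(m) sinh(2km)) for K < -2; for K = -2 the entries of (-T)^{-1} are (k - max(i,j))(k + min(i,j)) / (2k). -/

import Mathlib

open Real

/-- Inverse hyperbolic cosine (for `x ≥ 1`): `arccosh x = log (x + √(x² - 1))`. -/
noncomputable def arccosh (x : ℝ) : ℝ := Real.log (x + Real.sqrt (x ^ 2 - 1))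

/-- The `(2k-1)×(2k-1)` symmetric tridiagonal Toeplitz matrix with diagonal `K`
and off-diagonal `1`, indexed by `Fin (2k-1)` (index `i` corresponds to the
integer `i - (k-1)` in `S^(k) = {-(k-1),…,k-1}`). -/
def tridiag (k : ℕ) (K : ℝ) : Matrix (Fin (2 * k - 1)) (Fin (2 * k - 1)) ℝ :=
  fun i j =>
    if i = j then K else if ((i.val : ℤ) - (j.val : ℤ)).natAbs = 1 then 1 else 0

/-- The integer corresponding to a `Fin (2k-1)` index. -/
def idxZ (k : ℕ) (i : Fin (2 * k - 1)) : ℤ := (i.val : ℤ) - ((k : ℤ) - 1)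

/- ### Auxiliary lemmas -/

lemma arccosh_pos {x : ℝ} (hx : 1 < x) : 0 < arccosh x := by
  have h1 : 0 < Real.sqrt (x ^ 2 - 1) := Real.sqrt_pos.2 (by nlinarith)
  exact Real.log_pos (by linarith)

lemma cosh_arccosh {x : ℝ} (hx : 1 ≤ x) : Real.cosh (arccosh x) = x := by
  have hs : 0 ≤ x ^ 2 - 1 := by nlinarith
  have hsq : Real.sqrt (x ^ 2 - 1) ^ 2 = x ^ 2 - 1 := Real.sq_sqrt hs
  have hs0 : 0 ≤ Real.sqrt (x ^ 2 - 1) := Real.sqrt_nonneg _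
  have ht : 0 < x + Real.sqrt (x ^ 2 - 1) := by nlinarith
  have hinv : (x + Real.sqrt (x ^ 2 - 1))⁻¹ = x - Real.sqrt (x ^ 2 - 1) :=
    inv_eq_of_mul_eq_one_right (by nlinarith)
  rw [arccosh, Real.cosh_eq, Real.exp_neg, Real.exp_log ht, hinv]
  ring

lemma cast_le_real {a b : ℤ} (h : a ≤ b) : (a : ℝ) ≤ (b : ℝ) := by exact_mod_cast h

lemma sum_ind (N : ℕ) (t : ℤ) (c : ℝ) :
    (∑ l : Fin N, if ((l : ℕ) : ℤ) = t then c else 0) =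
      if 0 ≤ t ∧ t < N then c else 0 := by
  by_cases h : 0 ≤ t ∧ t < N
  · obtain ⟨h1, h2⟩ := h
    have ht : t.toNat < N := by omega
    rw [Finset.sum_eq_single (⟨t.toNat, ht⟩ : Fin N)]
    · rw [if_pos (show (((⟨t.toNat, ht⟩ : Fin N) : ℕ) : ℤ) = t by
        simp only [Fin.val_mk]; omega), if_pos ⟨h1, h2⟩]
    · intro b _ hb
      rw [if_neg]
      intro hbt
      refine hb (Fin.ext ?_)
      simp only [Fin.val_mk]
      omega
    · simp
  · rw [Finset.sum_eq_zero, if_neg h]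
    intro l _
    rw [if_neg]
    intro hl
    exact h ⟨by omega, by have := l.isLt; omega⟩

lemma sum_tridiag (k : ℕ) (K : ℝ) (hk : 1 ≤ k) (G : ℤ → ℝ) (i : Fin (2 * k - 1))
    (hbot : G (-(k : ℤ)) = 0) (htop : G (k : ℤ) = 0) :
    (∑ l, (-(tridiag k K)) i l * G (idxZ k l)) =
      -K * G (idxZ k i) - G (idxZ k i - 1) - G (idxZ k i + 1) := by
  have hi := i.isLt
  have hsum : ∀ l : Fin (2 * k - 1), (-(tridiag k K)) i l * G (idxZ k l) =
      (if l = i then -K * G (idxZ k i) else 0)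
      + (if ((l : ℕ) : ℤ) = (i : ℕ) - 1 then -G (idxZ k i - 1) else 0)
      + (if ((l : ℕ) : ℤ) = (i : ℕ) + 1 then -G (idxZ k i + 1) else 0) := by
    intro l
    simp only [Matrix.neg_apply, tridiag]
    by_cases e1 : l = i
    · subst e1
      have a2 : ¬(((l : ℕ) : ℤ) = (l : ℕ) - 1) := by omega
      have a3 : ¬(((l : ℕ) : ℤ) = (l : ℕ) + 1) := by omega
      rw [if_pos rfl, if_pos rfl, if_neg a2, if_neg a3]
      ring
    · have e1' : ¬ (i = l) := fun h => e1 h.symm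
      by_cases e2 : ((l : ℕ) : ℤ) = (i : ℕ) - 1
      · have a1 : (((i : ℕ) : ℤ) - ((l : ℕ) : ℤ)).natAbs = 1 := by omega
        have a3 : ¬(((l : ℕ) : ℤ) = (i : ℕ) + 1) := by omega
        have hidx : idxZ k l = idxZ k i - 1 := by simp only [idxZ]; omega
        rw [if_neg e1', if_pos a1, if_neg e1, if_pos e2, if_neg a3, hidx]
        ring
      · by_cases e3 : ((l : ℕ) : ℤ) = (i : ℕ) + 1
        · have a1 : (((i : ℕ) : ℤ) - ((l : ℕ) : ℤ)).natAbs = 1 := by omega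
          have hidx : idxZ k l = idxZ k i + 1 := by simp only [idxZ]; omega
          rw [if_neg e1', if_pos a1, if_neg e1, if_neg e2, if_pos e3, hidx]
          ring
        · have a1 : ¬((((i : ℕ) : ℤ) - ((l : ℕ) : ℤ)).natAbs = 1) := by omega
          rw [if_neg e1', if_neg a1, if_neg e1, if_neg e2, if_neg e3]
          ring
  rw [Finset.sum_congr rfl (fun l _ => hsum l), Finset.sum_add_distrib,
    Finset.sum_add_distrib, Finset.sum_ite_eq' Finset.univ i, sum_ind, sum_ind]
  simp only [Finset.mem_univ, if_pos]
  by_cases c2 : 0 ≤ ((i : ℕ) : ℤ) - 1 ∧ ((i : ℕ) : ℤ) - 1 < ((2 * k - 1 : ℕ) : ℤ)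
  · rw [if_pos c2]
    by_cases c3 : 0 ≤ ((i : ℕ) : ℤ) + 1 ∧ ((i : ℕ) : ℤ) + 1 < ((2 * k - 1 : ℕ) : ℤ)
    · rw [if_pos c3]; ring
    · rw [if_neg c3]
      have : idxZ k i + 1 = (k : ℤ) := by simp only [idxZ]; omega
      rw [this, htop]; ring
  · rw [if_neg c2]
    have hbz : idxZ k i - 1 = -(k : ℤ) := by simp only [idxZ]; omega
    by_cases c3 : 0 ≤ ((i : ℕ) : ℤ) + 1 ∧ ((i : ℕ) : ℤ) + 1 < ((2 * k - 1 : ℕ) : ℤ)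
    · rw [if_pos c3, hbz, hbot]; ring
    · rw [if_neg c3]
      have : idxZ k i + 1 = (k : ℤ) := by simp only [idxZ]; omega
      rw [this, htop, hbz, hbot]; ring

lemma cosh_helper (a m : ℝ) :
    Real.cosh ((a + 1) * m) + Real.cosh ((a - 1) * m) =
      2 * Real.cosh (a * m) * Real.cosh m := by
  rw [show (a + 1) * m = a * m + m by ring, show (a - 1) * m = a * m - m by ring,
    Real.cosh_add, Real.cosh_sub]
  ring

lemma sinh_helper (a m : ℝ) :
    Real.cosh ((a + 1) * m) - Real.cosh ((a - 1) * m) =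
      2 * Real.sinh (a * m) * Real.sinh m := by
  rw [show (a + 1) * m = a * m + m by ring, show (a - 1) * m = a * m - m by ring,
    Real.cosh_add, Real.cosh_sub]
  ring

noncomputable def coshG (k : ℕ) (m : ℝ) (y x : ℤ) : ℝ :=
  (Real.cosh ((2 * (k : ℝ) - |(x : ℝ) - (y : ℝ)|) * m) -
      Real.cosh (((x : ℝ) + (y : ℝ)) * m)) /
    (2 * Real.sinh m * Real.sinh (2 * (k : ℝ) * m))

lemma coshG_bot (k : ℕ) (m : ℝ) (y : ℤ) (hy : -(k : ℤ) ≤ y) :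
    coshG k m y (-(k : ℤ)) = 0 := by
  have hy' : -(k : ℝ) ≤ (y : ℝ) := by have := cast_le_real hy; push_cast at this; linarith
  have habs : |((-(k : ℤ) : ℤ) : ℝ) - (y : ℝ)| = (k : ℝ) + (y : ℝ) := by
    rw [abs_of_nonpos (by push_cast; linarith)]
    push_cast; ring
  rw [coshG, habs,
    show (2 * (k : ℝ) - ((k : ℝ) + (y : ℝ))) * m = ((k : ℝ) - y) * m by ring,
    show (((-(k : ℤ) : ℤ) : ℝ) + (y : ℝ)) * m = -(((k : ℝ) - y) * m) by push_cast; ring,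
    Real.cosh_neg, sub_self, zero_div]

lemma coshG_top (k : ℕ) (m : ℝ) (y : ℤ) (hy : y ≤ (k : ℤ)) :
    coshG k m y (k : ℤ) = 0 := by
  have hy' : (y : ℝ) ≤ (k : ℝ) := by exact_mod_cast hy
  have habs : |(((k : ℤ) : ℤ) : ℝ) - (y : ℝ)| = (k : ℝ) - (y : ℝ) := by
    rw [abs_of_nonneg (by push_cast; linarith)]
    push_cast; ring
  rw [coshG, habs,
    show (2 * (k : ℝ) - ((k : ℝ) - (y : ℝ))) * m = ((k : ℝ) + y) * m by ring,
    show ((((k : ℤ) : ℤ) : ℝ) + (y : ℝ)) * m = ((k : ℝ) + y) * m by push_cast; ring,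
    sub_self, zero_div]

lemma coshG_rec (k : ℕ) (hk : 1 ≤ k) (m : ℝ) (hm : 0 < m) (y x : ℤ) :
    2 * Real.cosh m * coshG k m y x - coshG k m y (x - 1) - coshG k m y (x + 1) =
      if x = y then 1 else 0 := by
  have hs1 : 0 < Real.sinh m := by positivity
  have hs2 : 0 < Real.sinh (2 * (k : ℝ) * m) := by
    have : (0:ℝ) < 2 * (k : ℝ) * m := by
      have : (1:ℝ) ≤ (k:ℝ) := by exact_mod_cast hk
      nlinarith
    positivity
  have hD : 2 * Real.sinh m * Real.sinh (2 * (k : ℝ) * m) ≠ 0 := by positivity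
  rcases lt_trichotomy x y with h | h | h
  · rw [if_neg (ne_of_lt h)]
    have hr : (x : ℝ) < (y : ℝ) := by exact_mod_cast h
    have hr1 : (x : ℝ) + 1 ≤ (y : ℝ) := by
      have : x + 1 ≤ y := h
      have := cast_le_real this; push_cast at this; linarith
    have e0 : |(x : ℝ) - (y : ℝ)| = (y : ℝ) - x := by rw [abs_of_nonpos (by linarith)]; ring
    have e1 : |((x - 1 : ℤ) : ℝ) - (y : ℝ)| = (y : ℝ) - x + 1 := by
      rw [abs_of_nonpos (by push_cast; linarith)]; push_cast; ring
    have e2 : |((x + 1 : ℤ) : ℝ) - (y : ℝ)| = (y : ℝ) - x - 1 := by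
      rw [abs_of_nonpos (by push_cast; linarith)]; push_cast; ring
    rw [coshG, coshG, coshG, e0, e1, e2]
    have H1 := cosh_helper (2 * (k : ℝ) - ((y : ℝ) - x)) m
    have H2 := cosh_helper ((x : ℝ) + y) m
    rw [show (2 * (k : ℝ) - ((y : ℝ) - x + 1)) * m = (2 * (k : ℝ) - ((y : ℝ) - x) - 1) * m
        by ring,
      show (2 * (k : ℝ) - ((y : ℝ) - x - 1)) * m = (2 * (k : ℝ) - ((y : ℝ) - x) + 1) * m
        by ring,
      show (((x - 1 : ℤ) : ℝ) + (y : ℝ)) * m = (((x : ℝ) + y) - 1) * m by push_cast; ring,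
      show (((x + 1 : ℤ) : ℝ) + (y : ℝ)) * m = (((x : ℝ) + y) + 1) * m by push_cast; ring]
    field_simp
    linear_combination (norm := ring_nf) H2 - H1
  · subst h
    rw [if_pos rfl]
    have e0 : |(x : ℝ) - (x : ℝ)| = 0 := by simp
    have e1 : |((x - 1 : ℤ) : ℝ) - (x : ℝ)| = 1 := by push_cast; rw [abs_of_nonpos] <;> linarith
    have e2 : |((x + 1 : ℤ) : ℝ) - (x : ℝ)| = 1 := by push_cast; rw [abs_of_nonneg] <;> linarith
    rw [coshG, coshG, coshG, e0, e1, e2]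
    have Hk := cosh_helper (2 * (k : ℝ)) m
    have Hx := cosh_helper (2 * (x : ℝ)) m
    have Hs := sinh_helper (2 * (k : ℝ)) m
    rw [show (2 * (k : ℝ) - 0) * m = 2 * (k : ℝ) * m by ring,
      show ((x : ℝ) + (x : ℝ)) * m = 2 * (x : ℝ) * m by ring,
      show (((x - 1 : ℤ) : ℝ) + (x : ℝ)) * m = (2 * (x : ℝ) - 1) * m by push_cast; ring,
      show (((x + 1 : ℤ) : ℝ) + (x : ℝ)) * m = (2 * (x : ℝ) + 1) * m by push_cast; ring]
    field_simp
    linear_combination (norm := ring_nf) -Hk + Hx + Hs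
  · rw [if_neg (ne_of_gt h)]
    have hr : (y : ℝ) < (x : ℝ) := by exact_mod_cast h
    have hr1 : (y : ℝ) + 1 ≤ (x : ℝ) := by
      have : y + 1 ≤ x := h
      have := cast_le_real this; push_cast at this; linarith
    have e0 : |(x : ℝ) - (y : ℝ)| = (x : ℝ) - y := by rw [abs_of_nonneg (by linarith)]
    have e1 : |((x - 1 : ℤ) : ℝ) - (y : ℝ)| = (x : ℝ) - y - 1 := by
      rw [abs_of_nonneg (by push_cast; linarith)]; push_cast; ring
    have e2 : |((x + 1 : ℤ) : ℝ) - (y : ℝ)| = (x : ℝ) - y + 1 := by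
      rw [abs_of_nonneg (by push_cast; linarith)]; push_cast; ring
    rw [coshG, coshG, coshG, e0, e1, e2]
    have H1 := cosh_helper (2 * (k : ℝ) - ((x : ℝ) - y)) m
    have H2 := cosh_helper ((x : ℝ) + y) m
    rw [show (2 * (k : ℝ) - ((x : ℝ) - y - 1)) * m = (2 * (k : ℝ) - ((x : ℝ) - y) + 1) * m
        by ring,
      show (2 * (k : ℝ) - ((x : ℝ) - y + 1)) * m = (2 * (k : ℝ) - ((x : ℝ) - y) - 1) * m
        by ring,
      show (((x - 1 : ℤ) : ℝ) + (y : ℝ)) * m = (((x : ℝ) + y) - 1) * m by push_cast; ring,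
      show (((x + 1 : ℤ) : ℝ) + (y : ℝ)) * m = (((x : ℝ) + y) + 1) * m by push_cast; ring]
    field_simp
    linear_combination (norm := ring_nf) H2 - H1

noncomputable def linG (k : ℕ) (y x : ℤ) : ℝ :=
  (((k : ℝ) - ((max x y : ℤ) : ℝ)) * ((k : ℝ) + ((min x y : ℤ) : ℝ))) / (2 * (k : ℝ))

lemma linG_bot (k : ℕ) (y : ℤ) (hy : -(k : ℤ) ≤ y) : linG k y (-(k : ℤ)) = 0 := by
  rw [linG, min_eq_left hy]
  push_cast
  ring

lemma linG_top (k : ℕ) (y : ℤ) (hy : y ≤ (k : ℤ)) : linG k y (k : ℤ) = 0 := by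
  rw [linG, max_eq_left hy]
  push_cast
  ring

lemma linG_rec (k : ℕ) (hk : 1 ≤ k) (y x : ℤ) :
    2 * linG k y x - linG k y (x - 1) - linG k y (x + 1) = if x = y then 1 else 0 := by
  have hk' : (2 : ℝ) * (k : ℝ) ≠ 0 := by
    have : (1:ℝ) ≤ (k:ℝ) := by exact_mod_cast hk
    positivity
  rcases lt_trichotomy x y with h | h | h
  · rw [if_neg (ne_of_lt h), linG, linG, linG, max_eq_right h.le,
      max_eq_right (by omega : x - 1 ≤ y), max_eq_right (by omega : x + 1 ≤ y),
      min_eq_left h.le, min_eq_left (by omega : x - 1 ≤ y), min_eq_left (by omega : x + 1 ≤ y)]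
    push_cast
    field_simp
    ring
  · subst h
    rw [if_pos rfl, linG, linG, linG, max_self, min_self,
      max_eq_right (by omega : x - 1 ≤ x), min_eq_left (by omega : x - 1 ≤ x),
      max_eq_left (by omega : x ≤ x + 1), min_eq_right (by omega : x ≤ x + 1)]
    push_cast
    field_simp
    ring
  · rw [if_neg (ne_of_gt h), linG, linG, linG, max_eq_left h.le,
      max_eq_left (by omega : y ≤ x - 1), max_eq_left (by omega : y ≤ x + 1),
      min_eq_right h.le, min_eq_right (by omega : y ≤ x - 1), min_eq_right (by omega : y ≤ x + 1)]
    push_cast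
    field_simp
    ring

lemma idxZ_inj (k : ℕ) {a b : Fin (2 * k - 1)} (h : idxZ k a = idxZ k b) : a = b := by
  refine Fin.ext ?_
  simp only [idxZ] at h
  omega

theorem tridiag_inverse (k : ℕ) (K : ℝ) (hk : 1 ≤ k) (hK : K ≤ -2) :
    (K < -2 →
      ∀ i j : Fin (2 * k - 1),
        (-(tridiag k K))⁻¹ i j =
          (Real.cosh ((2 * (k : ℝ) - |(idxZ k i : ℝ) - (idxZ k j : ℝ)|) *
              arccosh (-K / 2)) -
            Real.cosh (((idxZ k i : ℝ) + (idxZ k j : ℝ)) * arccosh (-K / 2))) /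
          (2 * Real.sinh (arccosh (-K / 2)) *
            Real.sinh (2 * (k : ℝ) * arccosh (-K / 2)))) ∧
    (K = -2 →
      ∀ i j : Fin (2 * k - 1),
        (-(tridiag k K))⁻¹ i j =
          (((k : ℝ) - (max (idxZ k i) (idxZ k j) : ℤ)) *
            ((k : ℝ) + (min (idxZ k i) (idxZ k j) : ℤ))) / (2 * (k : ℝ))) := by
  constructor
  · intro hK' i j
    set m := arccosh (-K / 2) with hmdef
    have hx1 : (1 : ℝ) < -K / 2 := by linarith
    have hm0 : 0 < m := arccosh_pos hx1
    have hch : Real.cosh m = -K / 2 := cosh_arccosh hx1.le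
    have hKc : -K = 2 * Real.cosh m := by rw [hch]; ring
    have hinv : (-(tridiag k K)) *
        (Matrix.of fun a b => coshG k m (idxZ k b) (idxZ k a)) = 1 := by
      ext a b
      rw [Matrix.mul_apply]
      have hb := b.isLt
      have hbl : -(k : ℤ) ≤ idxZ k b := by simp only [idxZ]; omega
      have hbu : idxZ k b ≤ (k : ℤ) := by simp only [idxZ]; omega
      simp only [Matrix.of_apply]
      rw [sum_tridiag k K hk (coshG k m (idxZ k b)) a (coshG_bot k m _ hbl)
        (coshG_top k m _ hbu), hKc, coshG_rec k hk m hm0 (idxZ k b) (idxZ k a),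
        Matrix.one_apply]
      by_cases hab : a = b
      · rw [if_pos (by rw [hab]), if_pos hab]
      · rw [if_neg (fun h => hab (idxZ_inj k h)), if_neg hab]
    rw [Matrix.inv_eq_right_inv hinv]
    rfl
  · intro hK' i j
    have hKc : -K = 2 := by rw [hK']; ring
    have hinv : (-(tridiag k K)) *
        (Matrix.of fun a b => linG k (idxZ k b) (idxZ k a)) = 1 := by
      ext a b
      rw [Matrix.mul_apply]
      have hb := b.isLt
      have hbl : -(k : ℤ) ≤ idxZ k b := by simp only [idxZ]; omega
      have hbu : idxZ k b ≤ (k : ℤ) := by simp only [idxZ]; omega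
      simp only [Matrix.of_apply]
      rw [sum_tridiag k K hk (linG k (idxZ k b)) a (linG_bot k _ hbl)
        (linG_top k _ hbu), hKc, linG_rec k hk (idxZ k b) (idxZ k a),
        Matrix.one_apply]
      by_cases hab : a = b
      · rw [if_pos (by rw [hab]), if_pos hab]
      · rw [if_neg (fun h => hab (idxZ_inj k h)), if_neg hab]
    rw [Matrix.inv_eq_right_inv hinv]
    rfl
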